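/- For integers m ≥ 2 and 1 ≤ j < m, the sum ∑_{r=1}^{m} (1/2 - r/m) sin(2πjr/m) equals (1/2)·cot(πj/m). -/

import Mathlib

open Finset Complex

lemma aux_geom_deriv (z : ℂ) (m : ℕ) : (z - 1) * ∑ r ∈ range m, (r : ℂ) * z ^ r
    = ((m : ℂ) - 1) * z ^ m - ∑ r ∈ range m, z ^ r + 1 := by
  induction m with
  | zero => simp
  | succ n ih =>
    rw [sum_range_succ, sum_range_succ (f := fun r => z ^ r), mul_add, ih]
    push_cast
    ring

theorem sin_sum_identity (m j : ℕ) (hm : 2 ≤ m) (hj1 : 1 ≤ j) (hjm : j < m) :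
    ∑ r ∈ Finset.Icc 1 m, ((1 : ℝ) / 2 - (r : ℝ) / m) *
      Real.sin (2 * Real.pi * j * r / m) = (1 / 2) * Real.cot (Real.pi * j / m) := by
  have hm0 : (0:ℝ) < m := by positivity
  have hj0 : (0:ℝ) < j := by exact_mod_cast hj1
  have hjm' : (j:ℝ) < m := by exact_mod_cast hjm
  set φ : ℝ := Real.pi * j / m with hφdef
  have hφ0 : 0 < φ := by positivity
  have hφπ : φ < Real.pi := by
    rw [hφdef, div_lt_iff₀ hm0]
    nlinarith [Real.pi_pos]
  have hsφ : Real.sin φ > 0 := Real.sin_pos_of_pos_of_lt_pi hφ0 hφπ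
  set θ : ℝ := 2 * Real.pi * j / m with hθdef
  have hθφ : θ = 2 * φ := by rw [hθdef, hφdef]; ring
  set z : ℂ := Complex.exp (θ * Complex.I) with hzdef
  have hzr : ∀ r : ℕ, z ^ r = Complex.exp ((r * θ : ℝ) * Complex.I) := by
    intro r
    rw [hzdef, ← Complex.exp_nat_mul]
    push_cast
    ring_nf
  have hzim : ∀ r : ℕ, (z ^ r).im = Real.sin (r * θ) := by
    intro r; rw [hzr r, Complex.exp_ofReal_mul_I_im]
  have hzm : z ^ m = 1 := by
    rw [hzr m]
    have : ((m : ℝ) * θ : ℝ) = (j : ℝ) * (2 * Real.pi) := by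
      rw [hθdef]; field_simp
    rw [this]
    have := Complex.exp_int_mul_two_pi_mul_I (j : ℤ)
    convert this using 2
    push_cast
    ring
  have hz1 : z ≠ 1 := by
    intro h
    rw [hzdef, Complex.exp_eq_one_iff] at h
    obtain ⟨n, hn⟩ := h
    have hI : (θ : ℂ) = n * (2 * Real.pi) := by
      have hn' : (θ:ℂ) * Complex.I = ((n:ℂ) * (2*Real.pi)) * Complex.I := by rw [hn]; ring
      exact mul_right_cancel₀ Complex.I_ne_zero hn'
    have hθn : θ = n * (2 * Real.pi) := by exact_mod_cast hI
    have hθ0 : 0 < θ := by rw [hθdef]; positivity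
    have hθ2 : θ < 2 * Real.pi := by
      rw [hθdef, div_lt_iff₀ hm0]
      nlinarith [Real.pi_pos]
    have hn0 : (0:ℝ) < n := by nlinarith [Real.pi_pos]
    have hn1 : (n:ℝ) < 1 := by nlinarith [Real.pi_pos]
    have : (0:ℤ) < n := by exact_mod_cast hn0
    have : (n:ℤ) < 1 := by exact_mod_cast hn1
    omega
  have hG : ∑ r ∈ range m, z ^ r = 0 := by
    rw [geom_sum_eq hz1, hzm]
    simp
  have hS : (z - 1) * ∑ r ∈ range m, (r : ℂ) * z ^ r = m := by
    rw [aux_geom_deriv, hzm, hG]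
    ring
  -- imaginary part of S
  have hzsub : z - 1 = Complex.ofReal (Real.cos θ - 1) + Complex.ofReal (Real.sin θ) * Complex.I := by
    apply Complex.ext <;>
      simp [hzdef, Complex.exp_ofReal_mul_I_re, Complex.exp_ofReal_mul_I_im,
        Complex.cos_ofReal_re, Complex.sin_ofReal_re]
  have hnormsq : Complex.normSq (z - 1) = 2 - 2 * Real.cos θ := by
    rw [hzsub, Complex.normSq_add_mul_I]
    nlinarith [Real.sin_sq_add_cos_sq θ]
  have hns0 : Complex.normSq (z - 1) ≠ 0 := by
    simp [Complex.normSq_eq_zero, sub_eq_zero, hz1]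
  have hSval : ∑ r ∈ range m, (r : ℂ) * z ^ r = m / (z - 1) := by
    rw [eq_div_iff (sub_ne_zero.mpr hz1), mul_comm, hS]
  have hSim : ∑ r ∈ range m, (r : ℝ) * Real.sin (r * θ)
      = - m * Real.sin θ / (2 - 2 * Real.cos θ) := by
    have h1 : (∑ r ∈ range m, (r : ℂ) * z ^ r).im = ∑ r ∈ range m, (r : ℝ) * Real.sin (r * θ) := by
      rw [Complex.im_sum]
      refine Finset.sum_congr rfl fun r _ => ?_
      rw [Complex.mul_im, hzim r]
      simp
    rw [← h1, hSval, Complex.div_im]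
    have him : (z - 1).im = Real.sin θ := by rw [hzsub]; simp [Complex.sin_ofReal_re]
    rw [him, hnormsq]
    simp
    ring
  have hGim : ∑ r ∈ range m, Real.sin (r * θ) = 0 := by
    have := congrArg Complex.im hG
    rw [Complex.im_sum] at this
    simp only [hzim] at this
    simpa using this
  -- convert Icc sum to range sum
  have hfm : ((1 : ℝ) / 2 - (m : ℝ) / m) * Real.sin (2 * Real.pi * j * m / m) = 0 := by
    have : (2 * Real.pi * j * m / m : ℝ) = (j : ℝ) * (2 * Real.pi) := by field_simp
    rw [this]
    have : Real.sin ((j:ℝ) * (2 * Real.pi)) = 0 := by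
      have h2 : ((j:ℝ) * (2 * Real.pi)) = (2 * j : ℕ) * Real.pi := by push_cast; ring
      rw [h2, Real.sin_nat_mul_pi]
    rw [this]; ring
  have harg : ∀ r : ℕ, (2 * Real.pi * j * r / m : ℝ) = r * θ := by
    intro r; rw [hθdef]; ring
  have hIcc : ∑ r ∈ Finset.Icc 1 m, ((1 : ℝ) / 2 - (r : ℝ) / m) *
      Real.sin (2 * Real.pi * j * r / m)
      = ∑ r ∈ range m, ((1 : ℝ) / 2 - (r : ℝ) / m) * Real.sin (r * θ) := by
    have hcong : ∑ r ∈ Finset.Icc 1 m, ((1 : ℝ) / 2 - (r : ℝ) / m) *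
        Real.sin (2 * Real.pi * j * r / m)
        = ∑ r ∈ Finset.Icc 1 m, ((1 : ℝ) / 2 - (r : ℝ) / m) * Real.sin (r * θ) := by
      refine Finset.sum_congr rfl fun r _ => ?_
      rw [harg r]
    rw [hcong]
    set g : ℕ → ℝ := fun r => ((1 : ℝ) / 2 - (r : ℝ) / m) * Real.sin (r * θ) with hg
    have e1 : Finset.range (m+1) = insert 0 (Finset.Icc 1 m) := by
      ext x; simp [Finset.mem_range, Finset.mem_Icc]; omega
    have h3 : ∑ r ∈ range (m+1), g r = g 0 + ∑ r ∈ Finset.Icc 1 m, g r := by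
      rw [e1, Finset.sum_insert (by simp)]
    have h4 : ∑ r ∈ range (m+1), g r = ∑ r ∈ range m, g r + g m :=
      Finset.sum_range_succ g m
    have hg0 : g 0 = 0 := by simp [hg]
    have hgm : g m = 0 := by
      have : g m = ((1 : ℝ) / 2 - (m : ℝ) / m) * Real.sin (2 * Real.pi * j * m / m) := by
        rw [hg]; simp only; rw [harg m]
      rw [this, hfm]
    rw [hg0, zero_add] at h3
    rw [hgm, add_zero] at h4
    rw [← h3, h4]
  rw [hIcc]
  have expand : ∑ r ∈ range m, ((1 : ℝ) / 2 - (r : ℝ) / m) * Real.sin (r * θ)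
      = (1/2) * (∑ r ∈ range m, Real.sin (r * θ))
        - (1/m) * (∑ r ∈ range m, (r : ℝ) * Real.sin (r * θ)) := by
    rw [Finset.mul_sum, Finset.mul_sum, ← Finset.sum_sub_distrib]
    refine Finset.sum_congr rfl fun r _ => ?_
    ring
  rw [expand, hGim, hSim]
  have hcos2 : (2 : ℝ) - 2 * Real.cos θ ≠ 0 := by rw [← hnormsq]; exact hns0
  have hmne : (m : ℝ) ≠ 0 := ne_of_gt hm0
  have hval : (1/2 : ℝ) * 0 - (1/m) * (- m * Real.sin θ / (2 - 2 * Real.cos θ))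
      = Real.sin θ / (2 - 2 * Real.cos θ) := by
    field_simp
    ring
  rw [hval]
  -- final trig identity
  rw [hθφ] at hcos2 ⊢
  rw [Real.cot_eq_cos_div_sin, Real.sin_two_mul, Real.cos_two_mul]
  rw [Real.cos_two_mul] at hcos2
  have hsne : Real.sin φ ≠ 0 := ne_of_gt hsφ
  have hpyth := Real.sin_sq_add_cos_sq φ
  rw [show (2:ℝ) - 2 * (2 * Real.cos φ ^ 2 - 1) = 4 * Real.sin φ ^ 2 by linear_combination (-4) * hpyth]
  field_simp
  ring
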